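/- Let M̂ be the endomorphism of E defined in the context. For 1 ≤ i < j < k < l ≤ n, define t_{ijkl} ∈ E by β_j = 2, β_k = -2, γ_{ij} = -3, γ_{ik} = 3, γ_{jl} = -5, γ_{kl} = 5, all other coordinates zero. Then M̂·t_{ijkl} = -4·t_{ijkl}. -/

import Mathlib

open Matrix

/-- Index set 𝓔 = {∅} ∪ {1,…,n} ∪ {{i,j} : i < j}, with points and pairs 0-indexed
(`Fin n` value `i` represents the paper's marked point `i+1`). -/
abbrev PairIdx (n : ℕ) := {p : Fin n × Fin n // p.1 < p.2}
abbrev TautIdx (n : ℕ) := Unit ⊕ Fin n ⊕ PairIdx n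
abbrev EVec (n : ℕ) := TautIdx n → ℚ

/-- The matrix M̂ with the explicit coefficients from the paper. -/
def Mhat (n : ℕ) : Matrix (TautIdx n) (TautIdx n) ℚ :=
  Matrix.of fun α β =>
    match α, β with
    | Sum.inl _, Sum.inl _ => 5 * ((n : ℚ) + 6)
    | Sum.inl _, Sum.inr (Sum.inl _) => 5 * (n : ℚ) + 34
    | Sum.inl _, Sum.inr (Sum.inr _) => 5 * ((n : ℚ) + 6)
    | Sum.inr (Sum.inl _), Sum.inl _ => 7
    | Sum.inr (Sum.inl k), Sum.inr (Sum.inl p) => if k = p then 35 else 7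
    | Sum.inr (Sum.inl k), Sum.inr (Sum.inr P) =>
        if k = P.1.1 then 3 else if k = P.1.2 then 35 else 7
    | Sum.inr (Sum.inr _), Sum.inl _ => 5
    | Sum.inr (Sum.inr P), Sum.inr (Sum.inl p) =>
        if p = P.1.1 ∨ p = P.1.2 then 15 else 5
    | Sum.inr (Sum.inr P), Sum.inr (Sum.inr Q) =>
        if P.1 = Q.1 then 9
        else if Q.1.1 = P.1.1 ∨ Q.1.1 = P.1.2 then 3
        else if Q.1.2 = P.1.1 ∨ Q.1.2 = P.1.2 then 15 else 5

/-- `uvec n i j` is the vector u_i of the paper, where `j` encodes the point i+1: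
β_i = 1, β_{i+1} = -1, all other coordinates 0. -/
def uvec (n : ℕ) (i j : Fin n) : EVec n
  | Sum.inr (Sum.inl k) => if k = i then 1 else if k = j then -1 else 0
  | _ => 0

/-- `vvec n i j` is the vector v_i: γ_{ik} = 1 and γ_{i+1,k} = -1 for k ≠ i, i+1. -/
def vvec (n : ℕ) (i j : Fin n) : EVec n
  | Sum.inr (Sum.inr P) =>
      if (P.1.1 = i ∨ P.1.2 = i) ∧ P.1.1 ≠ j ∧ P.1.2 ≠ j then 1
      else if (P.1.1 = j ∨ P.1.2 = j) ∧ P.1.1 ≠ i ∧ P.1.2 ≠ i then -1 else 0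
  | _ => 0

/-- w_{ijkl}: γ_{ik} = 1, γ_{jl} = 1, γ_{il} = -1, γ_{jk} = -1 (for i < j < k < l). -/
def wvec (n : ℕ) (i j k l : Fin n) : EVec n
  | Sum.inr (Sum.inr P) =>
      if P.1 = (i, k) then 1 else if P.1 = (j, l) then 1
      else if P.1 = (i, l) then -1 else if P.1 = (j, k) then -1 else 0
  | _ => 0

/-- t_{ijkl}: β_j = 2, β_k = -2, γ_{ij} = -3, γ_{ik} = 3, γ_{jl} = -5, γ_{kl} = 5. -/
def tvec (n : ℕ) (i j k l : Fin n) : EVec n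
  | Sum.inr (Sum.inl p) => if p = j then 2 else if p = k then -2 else 0
  | Sum.inr (Sum.inr P) =>
      if P.1 = (i, j) then -3 else if P.1 = (i, k) then 3
      else if P.1 = (j, l) then -5 else if P.1 = (k, l) then 5 else 0
  | _ => 0

/-- z: γ_{a,c} = 1, γ_{b,c} = -1 (for the exceptional case a = 3m+1, b = 3m+2, c = n). -/
def zvec (n : ℕ) (a b c : Fin n) : EVec n
  | Sum.inr (Sum.inr P) => if P.1 = (a, c) then 1 else if P.1 = (b, c) then -1 else 0
  | _ => 0

set_option maxHeartbeats 2000000 in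
/-- For 1 ≤ i < j < k < l ≤ n, the vector t_{ijkl} satisfies
M̂·t_{ijkl} = -4·t_{ijkl}. -/
theorem stmt6 (n : ℕ) (hn : 4 ≤ n) (i j k l : Fin n)
    (hij : i < j) (hjk : j < k) (hkl : k < l) :
    Mhat n *ᵥ tvec n i j k l = (-4 : ℚ) • tvec n i j k l := by
  have hik : i < k := hij.trans hjk
  have hjl : j < l := hjk.trans hkl
  have hil : i < l := hik.trans hkl
  have ht : tvec n i j k l =
      Pi.single (Sum.inr (Sum.inl j) : TautIdx n) 2
      + Pi.single (Sum.inr (Sum.inl k) : TautIdx n) (-2)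
      + Pi.single (Sum.inr (Sum.inr ⟨(i,j), hij⟩) : TautIdx n) (-3)
      + Pi.single (Sum.inr (Sum.inr ⟨(i,k), hik⟩) : TautIdx n) 3
      + Pi.single (Sum.inr (Sum.inr ⟨(j,l), hjl⟩) : TautIdx n) (-5)
      + Pi.single (Sum.inr (Sum.inr ⟨(k,l), hkl⟩) : TautIdx n) 5 := by
    funext b
    rcases b with _ | p | ⟨⟨a, b⟩, hab⟩ <;>
      simp only [tvec, Pi.single_apply, Pi.add_apply, Sum.inr.injEq, Sum.inl.injEq,
        Subtype.mk.injEq, Prod.mk.injEq, reduceCtorEq, if_false, add_zero, zero_add] <;>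
      split_ifs <;>
      first
      | (exfalso; simp only [Fin.ext_iff, Fin.lt_def, not_and, not_or,
          Prod.mk.injEq] at *; omega)
      | norm_num
  conv_lhs => rw [ht]
  simp only [Matrix.mulVec_add, Matrix.mulVec_single]
  funext α
  simp only [Pi.add_apply, Pi.smul_apply, smul_eq_mul, op_smul_eq_mul, Matrix.col_apply]
  rcases α with _ | p | ⟨⟨a, b⟩, hab⟩ <;>
    simp only [Mhat, tvec, Matrix.of_apply]
  · ring
  · split_ifs <;>
      first
      | (exfalso; simp only [Fin.ext_iff, Fin.lt_def, not_and, not_or,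
          Prod.mk.injEq] at *; omega)
      | norm_num
  · split_ifs <;>
      first
      | (exfalso; simp only [Fin.ext_iff, Fin.lt_def, not_and, not_or,
          Prod.mk.injEq] at *; omega)
      | norm_num
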